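/- Let b be a positive integer and n ≥ 3. Let B be the 2×n integer matrix whose m-th column is (r_b(m-1), 1)^T, and let C be the (n-2)×n integer matrix whose rows are: for 1 ≤ m ≤ n-3, the row b·e_m − e_{m+1} − b·e_{m+2} + e_{m+3}, and the last row b·e_{n-2} − (b+1)·e_{n-1} + e_n (where e_1,…,e_n is the standard basis of ℤ^n). Then the rows of C generate the kernel of the ℤ-linear map ℤ^n → ℤ^2 given by B; that is, the ℤ-span of the rows of C equals {u ∈ ℤ^n : B·u = 0}. -/

import Mathlib

/-- The ℓ-th repunit in base `b`: `r_b(ℓ) = ∑_{j=0}^{ℓ-1} b^j`, with `r_b(0) = 0`. -/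
def rep (b ℓ : ℕ) : ℕ := ∑ j ∈ Finset.range ℓ, b ^ j

/-- The `m`-th (1-indexed) standard basis vector of `ℤ^n`. -/
def eZ (n m : ℕ) : Fin n → ℤ := fun j => if (j : ℕ) + 1 = m then 1 else 0

/-- The 2×n matrix `B` whose `m`-th (1-indexed) column is `(r_b(m-1), 1)ᵀ`. -/
def Bmat (b n : ℕ) : Matrix (Fin 2) (Fin n) ℤ :=
  Matrix.of fun i j => if i = 0 then (rep b (j : ℕ) : ℤ) else 1

/-- The rows of the `(n-2)×n` matrix `C`: for `1 ≤ m ≤ n-3` the row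
`b·e_m − e_{m+1} − b·e_{m+2} + e_{m+3}`, and the last row `b·e_{n-2} − (b+1)·e_{n-1} + e_n`. -/
def Crows (b n : ℕ) : Fin (n - 2) → (Fin n → ℤ) := fun r =>
  if (r : ℕ) + 1 ≤ n - 3 then
    (b : ℤ) • eZ n ((r : ℕ) + 1) - eZ n ((r : ℕ) + 2) - (b : ℤ) • eZ n ((r : ℕ) + 3) +
      eZ n ((r : ℕ) + 4)
  else
    (b : ℤ) • eZ n (n - 2) - ((b : ℤ) + 1) • eZ n (n - 1) + eZ n n

/-- The auxiliary row pattern `P_t = b·e_{t+1} − (b+1)·e_{t+2} + e_{t+3}` (1-indexed `eZ`). -/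
def Qrow (b n t : ℕ) : Fin n → ℤ :=
  (b : ℤ) • eZ n (t + 1) - ((b : ℤ) + 1) • eZ n (t + 2) + eZ n (t + 3)

lemma rep_succ (b ℓ : ℕ) : rep b (ℓ + 1) = b * rep b ℓ + 1 := by
  unfold rep
  rw [Finset.sum_range_succ', Finset.mul_sum, pow_zero]
  congr 1
  exact Finset.sum_congr rfl (fun x _ => by rw [pow_succ, mul_comm])

lemma sum_mul_eZ {n : ℕ} (c : Fin n → ℤ) (m k : ℕ) (hm : k + 1 = m) (hk : k < n) :
    ∑ j, c j * eZ n m j = c ⟨k, hk⟩ := by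
  subst hm
  rw [Finset.sum_eq_single (⟨k, hk⟩ : Fin n)]
  · simp [eZ]
  · intro j _ hj
    have hne : (j : ℕ) + 1 ≠ k + 1 := by
      intro h
      have hv : (j : ℕ) = k := by omega
      exact hj (Fin.ext (by simp [hv]))
    simp [eZ, hne, show (j : ℕ) ≠ k by omega]
  · simp

lemma sum_mul_Qrow {b n : ℕ} (c : Fin n → ℤ) (t : ℕ) (ht : t + 3 ≤ n) :
    ∑ j, c j * Qrow b n t j =
      (b : ℤ) * c ⟨t, by omega⟩ - ((b : ℤ) + 1) * c ⟨t + 1, by omega⟩ + c ⟨t + 2, by omega⟩ := by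
  have expand : ∀ j : Fin n, c j * Qrow b n t j =
      (b : ℤ) * (c j * eZ n (t + 1) j) - ((b : ℤ) + 1) * (c j * eZ n (t + 2) j)
        + c j * eZ n (t + 3) j := by
    intro j
    simp only [Qrow, Pi.add_apply, Pi.sub_apply, Pi.smul_apply, smul_eq_mul]
    ring
  rw [Finset.sum_congr rfl (fun j _ => expand j), Finset.sum_add_distrib,
    Finset.sum_sub_distrib, ← Finset.mul_sum, ← Finset.mul_sum,
    sum_mul_eZ c (t + 1) t rfl (by omega),
    sum_mul_eZ c (t + 2) (t + 1) (by omega) (by omega),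
    sum_mul_eZ c (t + 3) (t + 2) (by omega) (by omega)]

lemma mem_ker_iff {b n : ℕ} (u : Fin n → ℤ) :
    u ∈ LinearMap.ker (Matrix.mulVecLin (Bmat b n)) ↔
      (∑ j : Fin n, (rep b (j : ℕ) : ℤ) * u j = 0) ∧ (∑ j, u j = 0) := by
  rw [LinearMap.mem_ker]
  constructor
  · intro h
    constructor
    · have := congrFun h 0
      simpa [Matrix.mulVecLin_apply, Matrix.mulVec, dotProduct, Bmat] using this
    · have := congrFun h 1
      simpa [Matrix.mulVecLin_apply, Matrix.mulVec, dotProduct, Bmat] using this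
  · rintro ⟨h0, h1⟩
    funext i
    fin_cases i <;>
      simp [Matrix.mulVecLin_apply, Matrix.mulVec, dotProduct, Bmat, h0, h1]

lemma Qrow_mem_ker {b n : ℕ} (t : ℕ) (ht : t + 3 ≤ n) :
    Qrow b n t ∈ LinearMap.ker (Matrix.mulVecLin (Bmat b n)) := by
  rw [mem_ker_iff]
  constructor
  · rw [sum_mul_Qrow (fun j : Fin n => (rep b (j : ℕ) : ℤ)) t ht]
    have h1 : (rep b (t + 1) : ℤ) = b * rep b t + 1 := by rw [rep_succ]; push_cast; ring
    have h2 : (rep b (t + 2) : ℤ) = b * rep b (t + 1) + 1 := by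
      rw [show t + 2 = (t + 1) + 1 from rfl, rep_succ]; push_cast; ring
    show (b : ℤ) * (rep b t : ℤ) - ((b : ℤ) + 1) * (rep b (t + 1) : ℤ) + (rep b (t + 2) : ℤ) = 0
    rw [h2, h1]
    ring
  · rw [show (∑ j, Qrow b n t j) = ∑ j, (fun _ : Fin n => (1 : ℤ)) j * Qrow b n t j by simp,
      sum_mul_Qrow _ t ht]
    ring

lemma crows_eq_generic (b n : ℕ) (r : Fin (n - 2)) (h : (r : ℕ) + 1 ≤ n - 3) :
    Crows b n r = Qrow b n (r : ℕ) + Qrow b n ((r : ℕ) + 1) := by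
  unfold Crows Qrow
  rw [if_pos h]
  rw [show (r : ℕ) + 1 + 1 = (r : ℕ) + 2 from rfl, show (r : ℕ) + 1 + 2 = (r : ℕ) + 3 from rfl,
    show (r : ℕ) + 1 + 3 = (r : ℕ) + 4 from rfl]
  module

lemma crows_eq_last (b n : ℕ) (hn : 3 ≤ n) (r : Fin (n - 2)) (h : ¬((r : ℕ) + 1 ≤ n - 3)) :
    Crows b n r = Qrow b n (n - 3) := by
  unfold Crows Qrow
  rw [if_neg h, show n - 3 + 1 = n - 2 by omega, show n - 3 + 2 = n - 1 by omega,
    show n - 3 + 3 = n by omega]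

lemma Q_mem_span (b n : ℕ) (hn : 3 ≤ n) :
    ∀ d : ℕ, ∀ r : Fin (n - 2), n - 3 ≤ (r : ℕ) + d →
      Qrow b n (r : ℕ) ∈ Submodule.span ℤ (Set.range (Crows b n)) := by
  intro d
  induction d with
  | zero =>
    intro r hr
    have hr' : ¬((r : ℕ) + 1 ≤ n - 3) := by omega
    have hval : (r : ℕ) = n - 3 := by have := r.isLt; omega
    rw [hval, ← crows_eq_last b n hn r hr']
    exact Submodule.subset_span ⟨r, rfl⟩
  | succ d ih =>
    intro r hr
    by_cases h : n - 3 ≤ (r : ℕ) + d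
    · exact ih r h
    · have h1 : (r : ℕ) + 1 ≤ n - 3 := by omega
      have h2 : (r : ℕ) + 1 < n - 2 := by omega
      have hQ : Qrow b n (r : ℕ) = Crows b n r - Qrow b n ((r : ℕ) + 1) := by
        rw [crows_eq_generic b n r h1]
        abel
      rw [hQ]
      refine sub_mem (Submodule.subset_span ⟨r, rfl⟩) ?_
      have := ih ⟨(r : ℕ) + 1, h2⟩ (by simp; omega)
      simpa using this

theorem stmt10 (b n : ℕ) (hb : 0 < b) (hn : 3 ≤ n) :
    Submodule.span ℤ (Set.range (Crows b n)) =
      LinearMap.ker (Matrix.mulVecLin (Bmat b n)) := by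
  apply le_antisymm
  · rw [Submodule.span_le]
    rintro _ ⟨r, rfl⟩
    rw [SetLike.mem_coe]
    by_cases h : (r : ℕ) + 1 ≤ n - 3
    · rw [crows_eq_generic b n r h]
      exact add_mem (Qrow_mem_ker _ (by omega)) (Qrow_mem_ker _ (by omega))
    · rw [crows_eq_last b n hn r h]
      exact Qrow_mem_ker _ (by omega)
  · intro u hu
    have main : ∀ m : ℕ, ∀ v : Fin n → ℤ,
        v ∈ LinearMap.ker (Matrix.mulVecLin (Bmat b n)) →
        (∀ j : Fin n, m + 2 ≤ (j : ℕ) → v j = 0) →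
        v ∈ Submodule.span ℤ (Set.range (Crows b n)) := by
      intro m
      induction m with
      | zero =>
        intro v hv hsupp
        obtain ⟨h0, h1⟩ := (mem_ker_iff v).mp hv
        have e1 : (∑ j : Fin n, (rep b (j : ℕ) : ℤ) * v j) = v ⟨1, by omega⟩ := by
          rw [Finset.sum_eq_single (⟨1, by omega⟩ : Fin n)]
          · show (rep b 1 : ℤ) * v ⟨1, by omega⟩ = v ⟨1, by omega⟩
            simp [rep]
          · intro j _ hj
            have hne : (j : ℕ) ≠ 1 := fun hc => hj (Fin.ext hc)
            by_cases h0 : (j : ℕ) = 0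
            · rw [h0]
              simp [rep]
            · rw [hsupp j (by omega)]
              ring
          · simp
        have hv1 : v ⟨1, by omega⟩ = 0 := by rw [← e1]; exact h0
        have e2 : (∑ j, v j) = v ⟨0, by omega⟩ := by
          rw [Finset.sum_eq_single (⟨0, by omega⟩ : Fin n)]
          · intro j _ hj
            have hne : (j : ℕ) ≠ 0 := fun hc => hj (Fin.ext hc)
            by_cases h1' : (j : ℕ) = 1
            · have : j = (⟨1, by omega⟩ : Fin n) := Fin.ext h1'
              rw [this]; exact hv1
            · exact hsupp j (by omega)
          · simp
        have hv0 : v ⟨0, by omega⟩ = 0 := by rw [← e2]; exact h1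
        have : v = 0 := by
          funext j
          rcases Nat.lt_or_ge (j : ℕ) 2 with hlt | hge
          · rcases Nat.lt_or_ge (j : ℕ) 1 with hlt' | hge'
            · have : j = (⟨0, by omega⟩ : Fin n) := Fin.ext (show (j : ℕ) = 0 by omega)
              rw [this]; exact hv0
            · have : j = (⟨1, by omega⟩ : Fin n) := Fin.ext (show (j : ℕ) = 1 by omega)
              rw [this]; exact hv1
          · exact hsupp j (by omega)
        rw [this]
        exact zero_mem _
      | succ m ih =>
        intro v hv hsupp
        by_cases hm : m + 2 < n
        · set c : ℤ := v ⟨m + 2, hm⟩ with hc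
          have hQk : Qrow b n m ∈ LinearMap.ker (Matrix.mulVecLin (Bmat b n)) :=
            Qrow_mem_ker m (by omega)
          have hv' : v - c • Qrow b n m ∈ LinearMap.ker (Matrix.mulVecLin (Bmat b n)) :=
            sub_mem hv (Submodule.smul_mem _ _ hQk)
          have hQapp : ∀ j : Fin n, Qrow b n m j =
              (b : ℤ) * (if (j : ℕ) + 1 = m + 1 then 1 else 0)
                - ((b : ℤ) + 1) * (if (j : ℕ) + 1 = m + 2 then 1 else 0)
                + (if (j : ℕ) + 1 = m + 3 then 1 else 0) := by
            intro j
            simp [Qrow, eZ]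
          have hsupp' : ∀ j : Fin n, m + 2 ≤ (j : ℕ) → (v - c • Qrow b n m) j = 0 := by
            intro j hj
            simp only [Pi.sub_apply, Pi.smul_apply, smul_eq_mul]
            rcases Nat.lt_or_ge (j : ℕ) (m + 3) with hlt | hge
            · have hjval : (j : ℕ) = m + 2 := by omega
              have hje : j = (⟨m + 2, hm⟩ : Fin n) := Fin.ext hjval
              have : Qrow b n m j = 1 := by
                rw [hQapp j, hjval]
                norm_num
              rw [this, hje, ← hc]
              ring
            · have h1 : v j = 0 := hsupp j (by omega)
              have h2 : Qrow b n m j = 0 := by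
                rw [hQapp j]
                have a1 : (j : ℕ) + 1 ≠ m + 1 := by omega
                have a2 : (j : ℕ) + 1 ≠ m + 2 := by omega
                have a3 : (j : ℕ) + 1 ≠ m + 3 := by omega
                simp [a1, a2, a3, show (j : ℕ) ≠ m by omega, show (j : ℕ) ≠ m + 1 by omega,
                  show (j : ℕ) ≠ m + 2 by omega]
              rw [h1, h2]
              ring
          have hmem := ih (v - c • Qrow b n m) hv' hsupp'
          have hQspan : Qrow b n m ∈ Submodule.span ℤ (Set.range (Crows b n)) := by
            have := Q_mem_span b n hn n ⟨m, by omega⟩ (by simp; omega)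
            simpa using this
          have : v = (v - c • Qrow b n m) + c • Qrow b n m := by abel
          rw [this]
          exact add_mem hmem (Submodule.smul_mem _ _ hQspan)
        · exact ih v hv (fun j hj => hsupp j (by omega))
    exact main n u hu (fun j hj => absurd j.isLt (by omega))
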